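/- (Full Polytope Symmetry, part 1) Let σ be any permutation of the 2m qubits commuting with the antipodal involution (σ ∘ τ = τ ∘ σ), and let P_σ be the induced permutation operator sending |x⟩ to |x ∘ σ⁻¹⟩. Then conjugation by P_σ maps every Z-generator of the X–I code Ξ(2m) to a Z-generator and every X-generator to an X-generator: P_σ ∘ Zop {i, τ i} ∘ P_σ⁻¹ = Zop {σ i, τ (σ i)}, and P_σ ∘ Xop {i, τ i, j, τ j} ∘ P_σ⁻¹ = Xop {σ i, τ (σ i), σ j, τ (σ j)}. -/

import Mathlib

open scoped BigOperators

/-- Bit strings on `2m` qubits. -/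
abbrev Bits (m : ℕ) := Fin (2*m) → ZMod 2

/-- The `2m`-qubit Hilbert space, as functions from computational basis labels to `ℂ`. -/
abbrev QState (m : ℕ) := Bits m → ℂ

/-- Indicator bit string of a finite set of qubits. -/
def indSet (m : ℕ) (S : Finset (Fin (2*m))) : Bits m := fun i => if i ∈ S then 1 else 0

/-- The Pauli-X operator on the set `S`: sends `|x⟩` to `|x + 1_S⟩`. -/
def Xop (m : ℕ) (S : Finset (Fin (2*m))) : QState m →ₗ[ℂ] QState m where
  toFun v := fun x => v (x + indSet m S)
  map_add' _ _ := rfl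
  map_smul' _ _ := rfl

/-- The Pauli-Z operator on the set `S`: sends `|x⟩` to `(-1)^{∑_{i∈S} x i} |x⟩`. -/
def Zop (m : ℕ) (S : Finset (Fin (2*m))) : QState m →ₗ[ℂ] QState m where
  toFun v := fun x => ((-1 : ℂ) ^ (∑ i ∈ S, (x i).val)) * v x
  map_add' u v := by funext x; simp [mul_add]
  map_smul' c v := by funext x; simp; ring

/-- The antipodal involution `τ i = i + m (mod 2m)`. -/
def tau (m : ℕ) (i : Fin (2*m)) : Fin (2*m) :=
  ⟨(i.val + m) % (2*m), Nat.mod_lt _ (by have := i.isLt; omega)⟩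

/-- The computational basis state `|x⟩`. -/
def ket (m : ℕ) (x : Bits m) : QState m := fun y => if y = x then 1 else 0

/-- The pair-equal bit string determined by `b : Fin m → ZMod 2`. -/
def xb (m : ℕ) (b : Fin m → ZMod 2) : Bits m :=
  fun i => b ⟨i.val % m, Nat.mod_lt _ (by have := i.isLt; omega)⟩

/-- The logical codeword `|0̄⟩` of the X–I code `Ξ(2m)`. -/
noncomputable def ket0 (m : ℕ) : QState m :=
  ((Real.sqrt (2 ^ (m-1)) : ℂ))⁻¹ •
    ∑ b ∈ Finset.univ.filter (fun b : Fin m → ZMod 2 => ∑ i, b i = 0), ket m (xb m b)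

/-- The logical codeword `|1̄⟩` of the X–I code `Ξ(2m)`. -/
noncomputable def ket1 (m : ℕ) : QState m :=
  ((Real.sqrt (2 ^ (m-1)) : ℂ))⁻¹ •
    ∑ b ∈ Finset.univ.filter (fun b : Fin m → ZMod 2 => ∑ i, b i = 1), ket m (xb m b)

/-- The permutation operator `P_σ` induced by a permutation `σ` of the qubits:
it sends `|x⟩` to `|x ∘ σ⁻¹⟩`. -/
def Pperm (m : ℕ) (σ : Equiv.Perm (Fin (2*m))) : QState m →ₗ[ℂ] QState m where
  toFun v := fun y => v (y ∘ σ)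
  map_add' _ _ := rfl
  map_smul' _ _ := rfl

lemma tau_ne (m : ℕ) (hm : 1 ≤ m) (i : Fin (2*m)) : i ≠ tau m i := by
  have hi := i.isLt
  simp only [tau, Ne, Fin.ext_iff]
  rcases lt_or_ge (i.val + m) (2*m) with h | h
  · rw [Nat.mod_eq_of_lt h]; omega
  · rw [Nat.mod_eq_sub_mod h, Nat.mod_eq_of_lt (by omega)]; omega

/-- (Full Polytope Symmetry, part 1) For any permutation `σ` of the qubits commuting
with the antipodal involution `τ`, conjugation by `P_σ` (with `P_σ⁻¹ = P_{σ⁻¹}`) maps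
every Z-generator of `Ξ(2m)` to a Z-generator and every X-generator to an
X-generator. -/
theorem XI_polytope_symmetry_generators (m : ℕ) (hm : 2 ≤ m)
    (σ : Equiv.Perm (Fin (2*m))) (hσ : ∀ i, σ (tau m i) = tau m (σ i)) :
    (Pperm m σ).comp (Pperm m σ⁻¹) = LinearMap.id ∧
    (∀ i : Fin (2*m),
        (Pperm m σ).comp ((Zop m {i, tau m i}).comp (Pperm m σ⁻¹)) =
          Zop m {σ i, tau m (σ i)}) ∧
    (∀ i j : Fin (2*m), ({i, tau m i} : Finset (Fin (2*m))) ≠ {j, tau m j} →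
        (Pperm m σ).comp ((Xop m {i, tau m i, j, tau m j}).comp (Pperm m σ⁻¹)) =
          Xop m {σ i, tau m (σ i), σ j, tau m (σ j)}) := by
  have key : ∀ y : Bits m, ((y ∘ ⇑σ) ∘ ⇑σ⁻¹) = y := by
    intro y; funext k; simp
  refine ⟨?_, ?_, ?_⟩
  · refine LinearMap.ext fun v => funext fun y => ?_
    simp only [LinearMap.comp_apply, Pperm, LinearMap.coe_mk, AddHom.coe_mk, LinearMap.id_apply]
    rw [key y]
  · intro i
    refine LinearMap.ext fun v => funext fun y => ?_
    simp only [LinearMap.comp_apply, Pperm, Zop, LinearMap.coe_mk, AddHom.coe_mk]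
    rw [key y]
    congr 1
    rw [Finset.sum_pair (tau_ne m (by omega) i),
        Finset.sum_pair (tau_ne m (by omega) (σ i))]
    simp only [Function.comp_apply, hσ]
  · intro i j _
    refine LinearMap.ext fun v => funext fun y => ?_
    simp only [LinearMap.comp_apply, Pperm, Xop, LinearMap.coe_mk, AddHom.coe_mk]
    congr 1
    funext k
    simp only [Pi.add_apply, Function.comp_apply, indSet, fun x => (Equiv.Perm.eq_inv_iff_eq (f := σ) (x := σ⁻¹ x) (y := x)).mp rfl]
    congr 1
    simp only [Finset.mem_insert, Finset.mem_singleton]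
    have hinv : ∀ a : Fin (2*m), σ⁻¹ k = a ↔ k = σ a := by
      intro a; constructor
      · rintro rfl; simp
      · rintro rfl; simp
    simp only [hinv, hσ]
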